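/- Let K ⊂ ℝ^n be a nonempty compact set and let Λ ⊂ ℝ^n be a dense subset of ℝ^n. Then for every z ∈ int conv K there exists z̄ ∈ Λ such that the closed segment [z − z̄, z + z̄] is contained in int conv K and |z̄| ≥ (1/(4n)) · dist(z, K). -/

import Mathlib

open Metric Set Finset

section aux
variable {E : Type*} [NormedAddCommGroup E] [NormedSpace ℝ E]

lemma isCompact_segment'' (x y : E) : IsCompact (segment ℝ x y) := by
  rw [segment_eq_image ℝ x y]
  exact isCompact_Icc.image (by fun_prop)

lemma seg_mem_interior' {C : Set E} (hC : Convex ℝ C) {z u : E}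
    (hz : z ∈ interior C) (hp : z + u ∈ C) (hm : z - u ∈ C) :
    segment ℝ (z - (3/4 : ℝ) • u) (z + (3/4 : ℝ) • u) ⊆ interior C := by
  rintro p ⟨a, b, ha, hb, hab, rfl⟩
  obtain rfl : a = 1 - b := by linarith
  have hb1 : b ≤ 1 := by linarith
  set r : ℝ := (2 * b - 1) * (3 / 4) with hr
  have hpe : (1 - b) • (z - (3/4 : ℝ) • u) + b • (z + (3/4 : ℝ) • u) = z + r • u := by
    rw [hr]; module
  rw [hpe]
  have hr1 : r ≤ 3/4 := by rw [hr]; nlinarith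
  have hr2 : -(3/4) ≤ r := by rw [hr]; nlinarith
  rcases le_or_gt 0 r with h0 | h0
  · have : z + r • u = (1 - r) • z + r • (z + u) := by module
    rw [this]
    exact hC.combo_interior_self_mem_interior hz hp (by linarith) h0 (by ring)
  · have : z + r • u = (1 + r) • z + (-r) • (z - u) := by module
    rw [this]
    exact hC.combo_interior_self_mem_interior hz hm (by linarith) (by linarith) (by ring)
end aux

/-- **Geometric lemma with directions in a dense set.** Let `K ⊆ ℝⁿ` be a nonempty
compact set and let `Λ ⊆ ℝⁿ` be dense. Then for every `z ∈ int conv K` there exists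
`z̄ ∈ Λ` such that the closed segment `[z − z̄, z + z̄]` is contained in `int conv K`
and `|z̄| ≥ (1/(4n))·dist(z, K)`. -/
theorem geometric_lemma_dense {n : ℕ}
    (K : Set (EuclideanSpace ℝ (Fin n))) (hK : IsCompact K) (hKne : K.Nonempty)
    (Λ : Set (EuclideanSpace ℝ (Fin n))) (hΛ : Dense Λ)
    (z : EuclideanSpace ℝ (Fin n)) (hz : z ∈ interior (convexHull ℝ K)) :
    ∃ zbar ∈ Λ,
      segment ℝ (z - zbar) (z + zbar) ⊆ interior (convexHull ℝ K) ∧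
      ‖zbar‖ ≥ (1 / (4 * (n : ℝ))) * Metric.infDist z K := by
  classical
  set C := convexHull ℝ K with hC
  have hCconv : Convex ℝ C := convex_convexHull ℝ K
  rcases le_or_gt (Metric.infDist z K) 0 with hd0 | hd0
  · -- trivial case: dist z K = 0
    obtain ⟨ρ, hρ, hball⟩ := Metric.isOpen_iff.mp isOpen_interior z hz
    obtain ⟨w, hwb, hwΛ⟩ := Metric.dense_iff.mp hΛ 0 ρ hρ
    rw [mem_ball, dist_zero_right] at hwb
    refine ⟨w, hwΛ, ?_, ?_⟩
    · rintro p ⟨a, b, ha, hb, hab, rfl⟩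
      obtain rfl : a = 1 - b := by linarith
      apply hball
      rw [mem_ball, dist_eq_norm]
      have he : (1 - b) • (z - w) + b • (z + w) - z = (2 * b - 1) • w := by module
      rw [he, norm_smul, Real.norm_eq_abs]
      have hb1 : |2 * b - 1| ≤ 1 := by rw [abs_le]; constructor <;> linarith
      calc |2 * b - 1| * ‖w‖ ≤ 1 * ‖w‖ :=
            mul_le_mul_of_nonneg_right hb1 (norm_nonneg w)
        _ < ρ := by simpa using hwb
    · exact le_trans (mul_nonpos_of_nonneg_of_nonpos (by positivity) hd0) (norm_nonneg w)
  · -- main case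
    have hn : 0 < n := by
      by_contra h
      push_neg at h
      interval_cases n
      obtain ⟨k, hk⟩ := hKne
      haveI : Subsingleton (EuclideanSpace ℝ (Fin 0)) :=
        ⟨fun a b => PiLp.ext fun i => i.elim0⟩
      have hzk : z = k := Subsingleton.elim z k
      rw [hzk, Metric.infDist_zero_of_mem hk] at hd0
      exact lt_irrefl 0 hd0
    set N : ℝ := (n : ℝ) with hN
    have hNpos : (0:ℝ) < N := Nat.cast_pos.mpr hn
    have hN1 : (1:ℝ) ≤ N := Nat.one_le_cast.mpr hn
    -- Carathéodory
    have hzC : z ∈ C := interior_subset hz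
    obtain ⟨ι, hι, x, w, hrange, hai, hwpos, hwsum, hwz⟩ :=
      eq_pos_convex_span_of_mem_convexHull hzC
    have hcard : Fintype.card ι ≤ n + 1 := by
      have h1 := hai.card_le_finrank_succ
      have h2 : Module.finrank ℝ (vectorSpan ℝ (Set.range x)) ≤ n := by
        have := Submodule.finrank_le (vectorSpan ℝ (Set.range x))
        rwa [finrank_euclideanSpace_fin] at this
      omega
    haveI hne : Nonempty ι := by
      rcases isEmpty_or_nonempty ι with h | h
      · rw [Finset.univ_eq_empty, Finset.sum_empty] at hwsum
        exact absurd hwsum zero_ne_one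
      · exact h
    have hcpos : 0 < Fintype.card ι := Fintype.card_pos
    -- a big weight
    obtain ⟨i0, -, hi0⟩ := Finset.exists_le_of_sum_le (Finset.univ_nonempty)
      (show ∑ _i : ι, (1 / (Fintype.card ι : ℝ)) ≤ ∑ i, w i by
        rw [Finset.sum_const, Finset.card_univ, nsmul_eq_mul, hwsum]
        rw [mul_one_div, div_self (show (Fintype.card ι : ℝ) ≠ 0 by exact_mod_cast hcpos.ne')])
    have hlam : 1 / (N + 1) ≤ w i0 := by
      refine le_trans ?_ hi0
      apply one_div_le_one_div_of_le (by exact_mod_cast hcpos)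
      have : (Fintype.card ι : ℝ) ≤ (n : ℝ) + 1 := by exact_mod_cast hcard
      linarith
    set x0 := x i0 with hx0
    have hx0K : x0 ∈ K := hrange ⟨i0, rfl⟩
    have hdist : Metric.infDist z K ≤ ‖x0 - z‖ := by
      have := Metric.infDist_le_dist_of_mem (x := z) hx0K
      rwa [dist_eq_norm, ← norm_neg, neg_sub] at this
    set s : ℝ := 1 / (2 * N) with hs
    have hspos : 0 < s := by positivity
    have hs1 : s ≤ 1 / (N + 1) := by
      rw [hs]
      apply one_div_le_one_div_of_le (by linarith)
      linarith
    set u := s • (x0 - z) with hu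
    -- z + u ∈ C
    have hplus : z + u ∈ C := by
      have he : z + u = (1 - s) • z + s • x0 := by rw [hu]; module
      rw [he]
      have hsle1 : s ≤ 1 := by
        rw [hs, div_le_one (by linarith)]; linarith
      exact hCconv hzC (subset_convexHull ℝ K hx0K) (by linarith) hspos.le (by ring)
    -- z - u ∈ C
    have hminus : z - u ∈ C := by
      set μ : ι → ℝ := fun i => (1 + s) * w i - (if i = i0 then s else 0) with hμ
      have hμ0 : ∀ i ∈ Finset.univ, 0 ≤ μ i := by
        intro i _
        simp only [hμ]
        by_cases h : i = i0
        · subst h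
          rw [if_pos rfl]
          have hws : s ≤ w i := hs1.trans hlam
          nlinarith [(hwpos i).le, hspos.le]
        · rw [if_neg h]
          nlinarith [(hwpos i).le, hspos.le]
      have hμsum : ∑ i, μ i = 1 := by
        rw [hμ]
        rw [Finset.sum_sub_distrib, ← Finset.mul_sum, hwsum,
          Finset.sum_ite_eq' Finset.univ i0, if_pos (Finset.mem_univ i0)]
        ring
      have hmem := Finset.centerMass_mem_convexHull Finset.univ hμ0
        (by rw [hμsum]; norm_num) (fun i _ => hrange ⟨i, rfl⟩)
      rw [Finset.centerMass_eq_of_sum_1 _ _ hμsum] at hmem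
      have he : ∑ i, μ i • x i = z - u := by
        have h1 : ∑ i, μ i • x i
            = (1 + s) • (∑ i, w i • x i) - s • x i0 := by
          have hcong : ∀ i ∈ Finset.univ, μ i • x i
              = (1 + s) • (w i • x i) - (if i = i0 then s • x i0 else 0) := by
            intro i _
            by_cases h : i = i0
            · subst h; simp [hμ, sub_smul, mul_smul]
            · simp [hμ, h, sub_smul, mul_smul]
          rw [Finset.sum_congr rfl hcong, Finset.sum_sub_distrib, ← Finset.smul_sum,
            Finset.sum_ite_eq' Finset.univ i0, if_pos (Finset.mem_univ i0)]
        rw [h1, hwz, hu]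
        module
      rwa [he] at hmem
    -- the segment with 3/4 shortening is in the interior
    have hseg := seg_mem_interior' hCconv hz hplus hminus
    set v : EuclideanSpace ℝ (Fin n) := (3/4 : ℝ) • u with hv
    have hScomp := isCompact_segment'' (z - v) (z + v)
    obtain ⟨δ, hδ, hthick⟩ :=
      hScomp.exists_thickening_subset_open isOpen_interior hseg
    set d := Metric.infDist z K with hd
    have hvnorm : (3 / (8 * N)) * d ≤ ‖v‖ := by
      rw [hv, hu, smul_smul, norm_smul, Real.norm_eq_abs]
      have h34 : |(3/4 : ℝ) * s| = 3 / (8 * N) := by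
        rw [hs, abs_of_pos (by positivity)]
        field_simp
        ring
      rw [h34]
      exact mul_le_mul_of_nonneg_left hdist (by positivity)
    set ε := min δ (d / (8 * N)) with hε
    have hεpos : 0 < ε := lt_min hδ (by positivity)
    obtain ⟨zb, hzb, hzbΛ⟩ := Metric.dense_iff.mp hΛ v ε hεpos
    rw [mem_ball, dist_eq_norm] at hzb
    refine ⟨zb, hzbΛ, ?_, ?_⟩
    · rintro p ⟨a, b, ha, hb, hab, rfl⟩
      obtain rfl : a = 1 - b := by linarith
      apply hthick
      rw [Metric.mem_thickening_iff]
      refine ⟨(1 - b) • (z - v) + b • (z + v), ⟨1 - b, b, by linarith, hb, by ring, rfl⟩, ?_⟩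
      rw [dist_eq_norm]
      have he : ((1 - b) • (z - zb) + b • (z + zb)) - ((1 - b) • (z - v) + b • (z + v))
          = (2 * b - 1) • (zb - v) := by module
      rw [he, norm_smul, Real.norm_eq_abs]
      have hb1 : |2 * b - 1| ≤ 1 := by rw [abs_le]; constructor <;> linarith
      calc |2 * b - 1| * ‖zb - v‖ ≤ 1 * ‖zb - v‖ :=
            mul_le_mul_of_nonneg_right hb1 (norm_nonneg _)
        _ < ε := by simpa using hzb
        _ ≤ δ := min_le_left _ _
    · have h1 : ‖v‖ - ‖zb‖ ≤ ‖zb - v‖ := by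
        have := norm_sub_norm_le v zb
        rw [← norm_neg (v - zb), neg_sub] at this
        linarith
      have h2 : ‖zb - v‖ < d / (8 * N) := lt_of_lt_of_le hzb (min_le_right _ _)
      have h3 : (1 / (4 * N)) * d = 3 / (8 * N) * d - d / (8 * N) := by
        field_simp
        ring
      show (1 / (4 * N)) * d ≤ ‖zb‖
      linarith
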